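/- Let H be an n-dimensional Hilbert space and {q_i}_{i=1}^N a weight number sequence. An (N,n) dual pair (F,G) satisfies max_{1≤i≤N} q_i ‖f_i‖‖g_i‖ = 1 if and only if ‖f_i‖‖g_i‖ = 1/q_i for all i. -/

import Mathlib

open scoped InnerProductSpace

/-- An `(N,n)` dual pair satisfies `max_i q_i ‖f_i‖‖g_i‖ = 1` iff
`‖f_i‖‖g_i‖ = 1/q_i` for all `i`. -/
theorem stmt_6 {H : Type*} [NormedAddCommGroup H] [InnerProductSpace ℂ H]
    [FiniteDimensional ℂ H] {N : ℕ} [NeZero N]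
    (f g : Fin N → H) (q : Fin N → ℝ)
    (hframe : Submodule.span ℂ (Set.range f) = ⊤)
    (hdual : ∀ x : H, ∑ i, ⟪g i, x⟫_ℂ • f i = x)
    (hq1 : ∀ i, 1 ≤ q i) (hqs : ∑ i, 1 / q i = (Module.finrank ℂ H : ℝ)) :
    Finset.univ.sup' Finset.univ_nonempty (fun i => q i * (‖f i‖ * ‖g i‖)) = 1 ↔
    ∀ i, ‖f i‖ * ‖g i‖ = 1 / q i := by
  have hqpos : ∀ i, (0:ℝ) < q i := fun i => lt_of_lt_of_le one_pos (hq1 i)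
  constructor
  · intro hsup
    -- trace identity: ∑ ⟪g i, f i⟫ = finrank
    set n : ℕ := Module.finrank ℂ H with hn
    have b := stdOrthonormalBasis ℂ H
    have key : ∑ i, ⟪g i, f i⟫_ℂ = (n : ℂ) := by
      have h1 : ∀ j, ⟪b j, b j⟫_ℂ = ∑ i, ⟪g i, b j⟫_ℂ * ⟪b j, f i⟫_ℂ := by
        intro j
        nth_rewrite 2 [← hdual (b j)]
        rw [inner_sum]
        simp [inner_smul_right]
      calc ∑ i, ⟪g i, f i⟫_ℂ = ∑ i, ∑ j, ⟪g i, b j⟫_ℂ * ⟪b j, f i⟫_ℂ := by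
            refine Finset.sum_congr rfl fun i _ => ?_
            rw [b.sum_inner_mul_inner]
        _ = ∑ j, ⟪b j, b j⟫_ℂ := by rw [Finset.sum_comm]; exact Finset.sum_congr rfl fun j _ => (h1 j).symm
        _ = (n : ℂ) := by
            have : ∀ j, ⟪b j, b j⟫_ℂ = 1 := fun j => by
              rw [inner_self_eq_norm_sq_to_K]; simp [b.orthonormal.1 j]
            simp [this]; exact hn.symm
    have hle : ∀ i, ‖f i‖ * ‖g i‖ ≤ 1 / q i := by
      intro i
      have h := Finset.le_sup' (fun i => q i * (‖f i‖ * ‖g i‖)) (Finset.mem_univ i)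
      rw [hsup] at h
      rw [le_div_iff₀ (hqpos i), mul_comm]
      exact h
    have hsum_ge : (n : ℝ) ≤ ∑ i, ‖f i‖ * ‖g i‖ := by
      have : ‖(n : ℂ)‖ ≤ ∑ i, ‖f i‖ * ‖g i‖ := by
        rw [← key]
        refine le_trans (norm_sum_le _ _) (Finset.sum_le_sum fun i _ => ?_)
        rw [mul_comm]
        exact norm_inner_le_norm _ _
      simpa using this
    have hsum_le : ∑ i, ‖f i‖ * ‖g i‖ ≤ ∑ i, 1 / q i :=
      Finset.sum_le_sum fun i _ => hle i
    have heq : ∑ i, ‖f i‖ * ‖g i‖ = ∑ i, 1 / q i := by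
      rw [hqs]; exact le_antisymm (by rw [← hqs]; exact hsum_le) hsum_ge
    intro i
    exact (Finset.sum_eq_sum_iff_of_le (fun i _ => hle i)).1 heq i (Finset.mem_univ i)
  · intro h
    have : ∀ i, q i * (‖f i‖ * ‖g i‖) = 1 := fun i => by
      rw [h i, mul_one_div, div_self (hqpos i).ne']
    rw [show (fun i => q i * (‖f i‖ * ‖g i‖)) = fun _ => (1:ℝ) from funext this]
    exact Finset.sup'_const _ _
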